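/- Let F and F' be finite collections of linear subspaces of ℝⁿ, and suppose F is rigid. Let f : ℝⁿ → ℝⁿ be a quasi-isometry that sends the affine pattern P_F to the affine pattern P_{F'}: there exists C₀ ≥ 0 such that for every A ∈ P_F there is B ∈ P_{F'} with the Hausdorff distance between f(A) and B at most C₀, and for every B ∈ P_{F'} there is A ∈ P_F with the Hausdorff distance between f(A) and B at most C₀. Then f is at bounded distance from an invertible affine map: there exist M ∈ GLₙ(ℝ), b ∈ ℝⁿ and C₁ ≥ 0 such that ‖f(x) − (M·x + b)‖ ≤ C₁ for all x ∈ ℝⁿ. Moreover, up to composition with affine homotheties there are only finitely many such affine maps: the set of linear parts M arising in this way, over all quasi-isometries of ℝⁿ sending P_F to P_{F'}, is contained in finitely many equivalence classes under multiplication by nonzero real scalars. -/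

import Mathlib

/-- A `(K,C)`-quasi-isometric embedding between metric spaces. -/
def IsQIEmbedding {X Y : Type*} [MetricSpace X] [MetricSpace Y] (K C : ℝ) (f : X → Y) : Prop :=
  ∀ x x' : X, (1/K) * dist x x' - C ≤ dist (f x) (f x') ∧
    dist (f x) (f x') ≤ K * dist x x' + C

/-- A `(K,C)`-quasi-isometry between metric spaces. -/
def IsQI {X Y : Type*} [MetricSpace X] [MetricSpace Y] (K C : ℝ) (f : X → Y) : Prop :=
  IsQIEmbedding K C f ∧ ∀ y : Y, ∃ x : X, dist (f x) y ≤ C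

/-- The affine subspace through `v` parallel to the linear subspace `V`. -/
def affTranslate {n : ℕ} (v : EuclideanSpace ℝ (Fin n))
    (V : Submodule ℝ (EuclideanSpace ℝ (Fin n))) : Set (EuclideanSpace ℝ (Fin n)) :=
  (fun x => v + x) '' (V : Set (EuclideanSpace ℝ (Fin n)))

/-- The affine pattern `P_F` induced by a collection `F` of linear subspaces of `ℝⁿ`:
all affine subspaces parallel to some member of `F`. -/
def affPattern {n : ℕ} (F : Set (Submodule ℝ (EuclideanSpace ℝ (Fin n)))) :
    Set (Set (EuclideanSpace ℝ (Fin n))) :=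
  {A | ∃ v : EuclideanSpace ℝ (Fin n), ∃ V ∈ F, A = affTranslate v V}

/-- `g` coarsely respects, with constant `R`, each foliation by affine subspaces parallel
to members of `F`. -/
def RespectsParallelPatterns {n : ℕ} (R : ℝ) (g : EuclideanSpace ℝ (Fin n) → EuclideanSpace ℝ (Fin n))
    (F : Set (Submodule ℝ (EuclideanSpace ℝ (Fin n)))) : Prop :=
  ∀ V ∈ F, ∀ v : EuclideanSpace ℝ (Fin n), ∃ w : EuclideanSpace ℝ (Fin n),
    EMetric.hausdorffEdist (g '' affTranslate v V) (affTranslate w V) ≤ ENNReal.ofReal R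

/-- A collection `F` of linear subspaces of `ℝⁿ` is rigid: every quasi-isometry coarsely
respecting each affine foliation parallel to a member of `F` is uniformly close to an
affine homothety. -/
def RigidCollection {n : ℕ} (F : Set (Submodule ℝ (EuclideanSpace ℝ (Fin n)))) : Prop :=
  ∀ K C R : ℝ, 1 ≤ K → 0 ≤ C → 0 ≤ R → ∃ R' : ℝ, 0 ≤ R' ∧
    ∀ g : EuclideanSpace ℝ (Fin n) → EuclideanSpace ℝ (Fin n),
      IsQI K C g → RespectsParallelPatterns R g F →
        ∃ (lam : ℝ) (b : EuclideanSpace ℝ (Fin n)), lam ≠ 0 ∧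
          ∀ x, dist (g x) (lam • x + b) ≤ R'

/-- `f` sends the affine pattern `P_F` to the affine pattern `P_{F'}`, with constant `C₀`. -/
def SendsPattern {n : ℕ} (f : EuclideanSpace ℝ (Fin n) → EuclideanSpace ℝ (Fin n))
    (F F' : Set (Submodule ℝ (EuclideanSpace ℝ (Fin n)))) (C₀ : ℝ) : Prop :=
  (∀ A ∈ affPattern F, ∃ B ∈ affPattern F',
    EMetric.hausdorffEdist (f '' A) B ≤ ENNReal.ofReal C₀) ∧
  (∀ B ∈ affPattern F', ∃ A ∈ affPattern F,
    EMetric.hausdorffEdist (f '' A) B ≤ ENNReal.ofReal C₀)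


open EMetric Metric Set Function

/-- Archimedean helper. -/
lemma arch_zero {a B : ℝ} (ha : 0 ≤ a) (h : ∀ N : ℕ, ((N : ℝ) + 1) * a ≤ B) : a = 0 := by
  by_contra hne
  have hapos : 0 < a := lt_of_le_of_ne ha (Ne.symm hne)
  obtain ⟨N, hN⟩ := exists_nat_gt (B / a)
  have h1 := h N
  have : B / a < (N : ℝ) + 1 := by linarith
  have : B < ((N : ℝ) + 1) * a := by
    rw [div_lt_iff₀ hapos] at this; linarith
  linarith

lemma hausdorffEdist_le_ofReal {α : Type*} [PseudoMetricSpace α] {s t : Set α} {r : ℝ}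
    (h1 : ∀ x ∈ s, ∃ y ∈ t, dist x y ≤ r)
    (h2 : ∀ y ∈ t, ∃ x ∈ s, dist x y ≤ r) :
    hausdorffEdist s t ≤ ENNReal.ofReal r := by
  apply hausdorffEdist_le_of_mem_edist
  · intro x hx
    obtain ⟨y, hy, hd⟩ := h1 x hx
    exact ⟨y, hy, by rw [edist_dist]; exact ENNReal.ofReal_le_ofReal hd⟩
  · intro y hy
    obtain ⟨x, hx, hd⟩ := h2 y hy
    exact ⟨x, hx, by rw [edist_dist, dist_comm]; exact ENNReal.ofReal_le_ofReal hd⟩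

lemma exists_dist_le_of_hausdorffEdist_le {α : Type*} [PseudoMetricSpace α] {s t : Set α}
    {r : ℝ} (hr : 0 ≤ r) (h : hausdorffEdist s t ≤ ENNReal.ofReal r) {x : α} (hx : x ∈ s) :
    ∃ y ∈ t, dist x y ≤ r + 1 := by
  have hlt : hausdorffEdist s t < ENNReal.ofReal (r + 1) := by
    rw [ENNReal.ofReal_add hr zero_le_one]
    refine lt_of_le_of_lt h ?_
    simpa using ENNReal.lt_add_right ENNReal.ofReal_ne_top (by simp)
  obtain ⟨y, hy, hd⟩ := exists_edist_lt_of_hausdorffEdist_lt hx hlt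
  exact ⟨y, hy, le_of_lt (edist_lt_ofReal.mp hd)⟩
open EMetric Metric Set Function
set_option maxHeartbeats 1000000

variable {n : ℕ}
local notation "E" => EuclideanSpace ℝ (Fin n)

lemma mem_affTranslate {v x : E} {V : Submodule ℝ E} :
    x ∈ affTranslate v V ↔ ∃ z ∈ V, x = v + z := by
  simp only [affTranslate, Set.mem_image, SetLike.mem_coe]
  constructor
  · rintro ⟨z, hz, rfl⟩; exact ⟨z, hz, rfl⟩
  · rintro ⟨z, hz, rfl⟩; exact ⟨z, hz, rfl⟩

lemma affTranslate_zero (V : Submodule ℝ E) : affTranslate (0 : E) V = (V : Set E) := by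
  ext x
  rw [mem_affTranslate]
  constructor
  · rintro ⟨z, hz, rfl⟩; simpa using hz
  · intro hx; exact ⟨x, hx, by simp⟩

lemma image_affTranslate (L : E →ₗ[ℝ] E) (v : E) (V : Submodule ℝ E) :
    L '' affTranslate v V = affTranslate (L v) (Submodule.map L V) := by
  ext y
  simp only [Set.mem_image, mem_affTranslate]
  constructor
  · rintro ⟨x, ⟨z, hz, rfl⟩, rfl⟩
    exact ⟨L z, Submodule.mem_map_of_mem hz, by rw [map_add]⟩
  · rintro ⟨w, hw, rfl⟩
    obtain ⟨z, hz, rfl⟩ := Submodule.mem_map.mp hw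
    exact ⟨v + z, ⟨z, hz, rfl⟩, by rw [map_add]⟩

lemma image_affineMap (M : E →ₗ[ℝ] E) (b : E) (V : Submodule ℝ E) :
    (fun x => M x + b) '' (V : Set E) = affTranslate b (Submodule.map M V) := by
  ext y
  simp only [Set.mem_image, mem_affTranslate, SetLike.mem_coe]
  constructor
  · rintro ⟨x, hx, rfl⟩
    exact ⟨M x, Submodule.mem_map_of_mem hx, by rw [add_comm]⟩
  · rintro ⟨w, hw, rfl⟩
    obtain ⟨z, hz, rfl⟩ := Submodule.mem_map.mp hw
    exact ⟨z, hz, by rw [add_comm]⟩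

/-- Two affine translates at finite Hausdorff distance: one direction contains the other. -/
lemma direction_le_of_hausdorffEdist_le {U W : Submodule ℝ E} {u w : E} {r : ℝ}
    (h : hausdorffEdist (affTranslate u U) (affTranslate w W) ≤ ENNReal.ofReal r) :
    U ≤ W := by
  intro x hx
  set r' : ℝ := max r 0 with hr'
  have hr'0 : 0 ≤ r' := le_max_right _ _
  have h' : hausdorffEdist (affTranslate u U) (affTranslate w W) ≤ ENNReal.ofReal r' :=
    le_trans h (ENNReal.ofReal_le_ofReal (le_max_left _ _))
  have hcl : IsClosed (W : Set E) := Submodule.closed_of_finiteDimensional W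
  have hWne : (W : Set E).Nonempty := ⟨0, W.zero_mem⟩
  rw [← SetLike.mem_coe, (hcl.mem_iff_infDist_zero hWne)]
  set d := Metric.infDist x (W : Set E) with hd
  have hd0 : 0 ≤ d := Metric.infDist_nonneg
  have key : ∀ N : ℕ, ((N : ℝ) + 1) * d ≤ r' + 1 + ‖w - u‖ := by
    intro N
    set c : ℝ := ((N : ℝ) + 1) with hc
    have hcpos : 0 < c := by positivity
    have hp : u + c • x ∈ affTranslate u U :=
      mem_affTranslate.mpr ⟨c • x, U.smul_mem c hx, rfl⟩
    obtain ⟨y, hy, hdy⟩ := exists_dist_le_of_hausdorffEdist_le hr'0 h' hp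
    obtain ⟨z, hz, rfl⟩ := mem_affTranslate.mp hy
    have hq : c⁻¹ • z ∈ (W : Set E) := W.smul_mem _ hz
    have hdist : dist x (c⁻¹ • z) = c⁻¹ * ‖c • x - z‖ := by
      rw [dist_eq_norm]
      rw [show x - c⁻¹ • z = c⁻¹ • (c • x - z) by
        rw [smul_sub, smul_smul, inv_mul_cancel₀ (ne_of_gt hcpos), one_smul]]
      rw [norm_smul, Real.norm_eq_abs, abs_of_pos (inv_pos.mpr hcpos)]
    have hnorm : ‖c • x - z‖ ≤ r' + 1 + ‖w - u‖ := by
      have : c • x - z = (u + c • x) - (w + z) + (w - u) := by abel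
      rw [this]
      calc ‖(u + c • x) - (w + z) + (w - u)‖ ≤ ‖(u + c • x) - (w + z)‖ + ‖w - u‖ :=
            norm_add_le _ _
        _ ≤ r' + 1 + ‖w - u‖ := by
            rw [← dist_eq_norm]; linarith
    have hle : d ≤ c⁻¹ * (r' + 1 + ‖w - u‖) := by
      refine le_trans (Metric.infDist_le_dist_of_mem hq) ?_
      rw [hdist]
      exact mul_le_mul_of_nonneg_left hnorm (le_of_lt (inv_pos.mpr hcpos))
    calc c * d ≤ c * (c⁻¹ * (r' + 1 + ‖w - u‖)) := mul_le_mul_of_nonneg_left hle (le_of_lt hcpos)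
      _ = r' + 1 + ‖w - u‖ := by field_simp
  exact arch_zero hd0 key

lemma direction_eq_of_hausdorffEdist_le {U W : Submodule ℝ E} {u w : E} {r : ℝ}
    (h : hausdorffEdist (affTranslate u U) (affTranslate w W) ≤ ENNReal.ofReal r) :
    U = W :=
  le_antisymm (direction_le_of_hausdorffEdist_le h)
    (direction_le_of_hausdorffEdist_le (Metric.hausdorffEDist_comm.trans_le h))


/-- A linear map at bounded distance from an affine homothety equals the homothety's
linear part. -/
lemma linear_eq_of_bounded (T : E →ₗ[ℝ] E) (lam : ℝ) (b : E) (R' : ℝ)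
    (h : ∀ x, dist (T x) (lam • x + b) ≤ R') : ∀ x, T x = lam • x := by
  intro x
  have key : ∀ N : ℕ, ((N : ℝ) + 1) * ‖T x - lam • x‖ ≤ R' + ‖b‖ := by
    intro N
    set c : ℝ := ((N : ℝ) + 1) with hc
    have h1 := h (c • x)
    rw [dist_eq_norm] at h1
    have h2 : T (c • x) - (lam • c • x + b) = c • (T x - lam • x) - b := by
      rw [map_smul]
      rw [smul_sub, smul_comm]
      abel
    rw [h2] at h1
    have h3 : ‖c • (T x - lam • x)‖ - ‖b‖ ≤ ‖c • (T x - lam • x) - b‖ :=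
      norm_sub_norm_le _ _
    rw [norm_smul, Real.norm_eq_abs, abs_of_pos (by positivity : (0:ℝ) < c)] at h3
    linarith
  have h0 := arch_zero (norm_nonneg _) key
  have := norm_eq_zero.mp h0
  rw [sub_eq_zero] at this
  exact this

/-- Two bijective linear maps acting identically on a rigid collection `F` differ by a
nonzero scalar. -/
lemma scalar_of_same_action {F : Set (Submodule ℝ E)} (hrigid : RigidCollection F)
    (M₁ M₂ : E →ₗ[ℝ] E) (h₁ : Function.Bijective M₁) (h₂ : Function.Bijective M₂)
    (hsame : ∀ V ∈ F, Submodule.map M₁ V = Submodule.map M₂ V) :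
    ∃ lam : ℝ, lam ≠ 0 ∧ M₁ = lam • M₂ := by
  classical
  set eq₂ : E ≃ₗ[ℝ] E := LinearEquiv.ofBijective M₂ h₂ with heq₂
  set L : E →ₗ[ℝ] E := (eq₂.symm : E →ₗ[ℝ] E) ∘ₗ M₁ with hL
  have hLbij : Function.Bijective L := by
    rw [hL, LinearMap.coe_comp]; exact eq₂.symm.bijective.comp h₁
  -- L fixes each V ∈ F
  have hLfix : ∀ V ∈ F, Submodule.map L V = V := by
    intro V hV
    rw [hL, Submodule.map_comp, hsame V hV]
    have : Submodule.map (M₂ : E →ₗ[ℝ] E) V = Submodule.map (eq₂ : E →ₗ[ℝ] E) V := rfl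
    rw [this, ← Submodule.map_comp]
    have hcomp : ((eq₂.symm : E →ₗ[ℝ] E) ∘ₗ (eq₂ : E →ₗ[ℝ] E)) = LinearMap.id := by
      ext x; simp
    rw [hcomp, Submodule.map_id]
  -- L as a continuous linear equiv
  set Leq : E ≃ₗ[ℝ] E := LinearEquiv.ofBijective L hLbij with hLeq
  set Lc : E ≃L[ℝ] E := LinearEquiv.toContinuousLinearEquiv Leq with hLc
  set KL : ℝ := max ‖(Lc : E →L[ℝ] E)‖ ‖(Lc.symm : E →L[ℝ] E)‖ + 1 with hKL
  have hKL1 : 1 ≤ KL := by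
    have : (0:ℝ) ≤ max ‖(Lc : E →L[ℝ] E)‖ ‖(Lc.symm : E →L[ℝ] E)‖ :=
      le_trans (norm_nonneg _) (le_max_left _ _)
    linarith
  have hKLpos : 0 < KL := by linarith
  have hLcoe : ∀ x, Lc x = L x := fun x => rfl
  have hqi : IsQI KL 0 (fun x => L x) := by
    constructor
    · intro x y
      constructor
      · rw [sub_le_iff_le_add, add_zero, one_div, inv_mul_le_iff₀ hKLpos]
        show dist x y ≤ KL * dist (L x) (L y)
        have h5 : dist x y = dist (Lc.symm (Lc x)) (Lc.symm (Lc y)) := by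
          simp
        calc dist x y ≤ ‖(Lc.symm : E →L[ℝ] E)‖ * dist (Lc x) (Lc y) := by
              rw [h5]; exact (Lc.symm : E →L[ℝ] E).lipschitz.dist_le_mul _ _
          _ ≤ KL * dist (L x) (L y) := by
              apply mul_le_mul (by rw [hKL]; exact le_trans (le_max_right _ _) (by linarith))
                (by rw [hLcoe, hLcoe]) dist_nonneg (le_of_lt hKLpos)
      · have := (Lc : E →L[ℝ] E).lipschitz.dist_le_mul x y
        rw [add_zero]
        calc dist (L x) (L y) = dist (Lc x) (Lc y) := by rw [hLcoe, hLcoe]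
          _ ≤ ‖(Lc : E →L[ℝ] E)‖ * dist x y := (Lc : E →L[ℝ] E).lipschitz.dist_le_mul _ _
          _ ≤ KL * dist x y := by
              apply mul_le_mul_of_nonneg_right _ dist_nonneg
              rw [hKL]; exact le_trans (le_max_left _ _) (by linarith)
    · intro y
      exact ⟨Leq.symm y, by simp [show (L (Leq.symm y) : E) = Leq (Leq.symm y) from rfl]⟩
  have hresp : RespectsParallelPatterns 0 (fun x => L x) F := by
    intro V hV v
    refine ⟨L v, ?_⟩
    have himg : (fun x => L x) '' affTranslate v V = affTranslate (L v) V := by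
      rw [show (fun x => L x) '' affTranslate v V = L '' affTranslate v V from rfl,
        image_affTranslate, hLfix V hV]
    rw [himg]; show Metric.hausdorffEDist _ _ ≤ _; rw [Metric.hausdorffEDist_self]
    exact zero_le
  obtain ⟨R', hR'0, hspec⟩ := hrigid KL 0 0 hKL1 le_rfl le_rfl
  obtain ⟨lam, b, hlam, hbound⟩ := hspec _ hqi hresp
  have hLeqlam : ∀ x, L x = lam • x := linear_eq_of_bounded L lam b R' hbound
  refine ⟨lam, hlam, ?_⟩
  ext x
  have h6 : M₁ x = eq₂ (L x) := by
    rw [hL]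
    simp only [LinearMap.coe_comp, Function.comp_apply, LinearEquiv.coe_coe]
    rw [LinearEquiv.apply_symm_apply]
  rw [h6, hLeqlam x, map_smul]
  have h7 : eq₂ x = M₂ x := rfl
  rw [h7]
  simp

/-- If `g` sends `P_F` into `P_{F'}` and is boundedly close to the affine map `x ↦ M x + b`,
then `M` maps each member of `F` to a member of `F'`. -/
lemma map_mem_of_approx {F F' : Set (Submodule ℝ E)}
    {g : E → E} {C₀' : ℝ} (hC₀' : 0 ≤ C₀') (hsend : SendsPattern g F F' C₀')
    (M : E →ₗ[ℝ] E) (b : E) (C₁ : ℝ) (hb : ∀ x, dist (g x) (M x + b) ≤ C₁) :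
    ∀ V ∈ F, Submodule.map M V ∈ F' := by
  intro V hV
  have hC₁0 : 0 ≤ C₁ := le_trans dist_nonneg (hb 0)
  have hA : affTranslate 0 V ∈ affPattern F := ⟨0, V, hV, rfl⟩
  obtain ⟨B, hB, hBdist⟩ := hsend.1 _ hA
  obtain ⟨w, W, hW, rfl⟩ := hB
  have himg : (fun x => M x + b) '' affTranslate 0 V = affTranslate b (Submodule.map M V) := by
    rw [affTranslate_zero, image_affineMap]
  have hclose : EMetric.hausdorffEdist ((fun x => M x + b) '' affTranslate 0 V)
      (g '' affTranslate 0 V) ≤ ENNReal.ofReal C₁ := by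
    apply hausdorffEdist_le_ofReal
    · rintro x ⟨a, ha, rfl⟩
      exact ⟨g a, Set.mem_image_of_mem _ ha, by rw [dist_comm]; exact hb a⟩
    · rintro y ⟨a, ha, rfl⟩
      exact ⟨M a + b, Set.mem_image_of_mem _ ha, by rw [dist_comm]; exact hb a⟩
  have htri : EMetric.hausdorffEdist (affTranslate b (Submodule.map M V))
      (affTranslate w W) ≤ ENNReal.ofReal (C₁ + C₀') := by
    rw [ENNReal.ofReal_add hC₁0 hC₀']
    calc EMetric.hausdorffEdist (affTranslate b (Submodule.map M V)) (affTranslate w W)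
        ≤ EMetric.hausdorffEdist (affTranslate b (Submodule.map M V))
            (g '' affTranslate 0 V) + EMetric.hausdorffEdist (g '' affTranslate 0 V)
            (affTranslate w W) := EMetric.hausdorffEdist_triangle
      _ ≤ ENNReal.ofReal C₁ + ENNReal.ofReal C₀' := by
          apply add_le_add _ hBdist
          rw [← himg]; exact hclose
  have := direction_eq_of_hausdorffEdist_le htri
  rw [this]; exact hW


lemma qi_lower_dist {f : E → E} {K C : ℝ} (hK : 1 ≤ K) (hf : IsQIEmbedding K C f) :
    ∀ x y : E, dist x y ≤ K * dist (f x) (f y) + K * C := by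
  intro x y
  have hKpos : (0:ℝ) < K := by linarith
  have h1 := (hf x y).1
  have h2 : (1/K) * dist x y ≤ dist (f x) (f y) + C := by linarith
  have h3 := mul_le_mul_of_nonneg_left h2 hKpos.le
  rw [show K * ((1/K) * dist x y) = dist x y by field_simp] at h3
  calc dist x y ≤ K * (dist (f x) (f y) + C) := h3
    _ = K * dist (f x) (f y) + K * C := by ring

lemma exists_affine_approx {F F' : Set (Submodule ℝ E)} (hrigid : RigidCollection F)
    (f : E → E) (K C : ℝ) (hK : 1 ≤ K) (hC : 0 ≤ C) (hf : IsQI K C f)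
    (C₀ : ℝ) (hC₀ : 0 ≤ C₀) (hsend : SendsPattern f F F' C₀) :
    ∃ (M : E →ₗ[ℝ] E) (b : E) (C₁ : ℝ),
      Function.Bijective M ∧ 0 ≤ C₁ ∧ ∀ x, dist (f x) (M x + b) ≤ C₁ := by
  classical
  rcases subsingleton_or_nontrivial (EuclideanSpace ℝ (Fin n)) with hsub | hnt
  · refine ⟨LinearMap.id, 0, 0, Function.bijective_id, le_rfl, fun x => ?_⟩
    rw [Subsingleton.elim (f x) ((LinearMap.id : E →ₗ[ℝ] E) x + 0)]
    simp
  obtain ⟨e, he⟩ := exists_norm_eq (EuclideanSpace ℝ (Fin n)) (zero_le_one)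
  have hKpos : (0:ℝ) < K := by linarith
  have hup : ∀ x y : E, dist (f x) (f y) ≤ K * dist x y + C := fun x y => (hf.1 x y).2
  have hlo : ∀ x y : E, dist x y ≤ K * dist (f x) (f y) + K * C := qi_lower_dist hK hf.1
  choose fb hfb using hf.2
  set h : E → E → E := fun t x => fb (f x + t) with hh
  -- lazy pointwise bound
  have hlazy : ∀ t x, dist (h t x) x ≤ K * (2*C + ‖t‖) := by
    intro t x
    have d1 : dist (f (h t x)) (f x + t) ≤ C := hfb (f x + t)
    have d2 : dist (f x + t) (f x) = ‖t‖ := by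
      rw [dist_eq_norm, add_sub_cancel_left]
    have d3 : dist (f (h t x)) (f x) ≤ C + ‖t‖ := by
      calc dist (f (h t x)) (f x) ≤ dist (f (h t x)) (f x + t) + dist (f x + t) (f x) :=
            dist_triangle _ _ _
        _ ≤ C + ‖t‖ := by rw [d2]; linarith
    calc dist (h t x) x ≤ K * dist (f (h t x)) (f x) + K * C := hlo _ _
      _ ≤ K * (C + ‖t‖) + K * C := by nlinarith
      _ = K * (2*C + ‖t‖) := by ring
  -- quasi-inverse is coarsely Lipschitz
  have hfbd : ∀ p q : E, dist (fb p) (fb q) ≤ K * dist p q + 3*K*C := by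
    intro p q
    have h1 : dist (f (fb p)) (f (fb q)) ≤ dist p q + 2*C := by
      have := dist_triangle4 (f (fb p)) p q (f (fb q))
      have e1 : dist (f (fb p)) p ≤ C := hfb p
      have e2 : dist q (f (fb q)) ≤ C := by rw [dist_comm]; exact hfb q
      linarith
    calc dist (fb p) (fb q) ≤ K * dist (f (fb p)) (f (fb q)) + K * C := hlo _ _
      _ ≤ K * (dist p q + 2*C) + K * C := by nlinarith
      _ = K * dist p q + 3*K*C := by ring
  -- each h t is a quasi-isometry with uniform constants
  have hhqi : ∀ t, IsQI (K^2) (4*K*C) (h t) := by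
    intro t
    refine ⟨fun x y => ⟨?_, ?_⟩, ?_⟩
    · -- lower bound
      have a2 : dist (f x) (f y) ≤ dist (f (h t x)) (f (h t y)) + 2*C := by
        have b1 : dist (f x + t) (f y + t) = dist (f x) (f y) := dist_add_right _ _ _
        have b2 := dist_triangle4 (f x + t) (f (h t x)) (f (h t y)) (f y + t)
        have b3 : dist (f x + t) (f (h t x)) ≤ C := by rw [dist_comm]; exact hfb _
        have b4 : dist (f (h t y)) (f y + t) ≤ C := hfb _
        linarith
      have a3 : dist (f (h t x)) (f (h t y)) ≤ K * dist (h t x) (h t y) + C := hup _ _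
      have key : dist x y ≤ K^2 * dist (h t x) (h t y) + 4*K*C := by
        have a1 : dist x y ≤ K * dist (f x) (f y) + K*C := hlo _ _
        nlinarith
      rw [sub_le_iff_le_add, one_div, inv_mul_le_iff₀ (by positivity : (0:ℝ) < K^2)]
      have hKC : (0:ℝ) ≤ 4*(K*C) := by nlinarith
      have hK21 : (1:ℝ) ≤ K^2 := by nlinarith
      have h4kc : 4*K*C ≤ K^2 * (4*K*C) := by
        nlinarith [mul_le_mul_of_nonneg_right hK21 hKC]
      calc dist x y ≤ K^2 * dist (h t x) (h t y) + 4*K*C := key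
        _ ≤ K^2 * dist (h t x) (h t y) + K^2*(4*K*C) := by linarith
        _ = K^2 * (dist (h t x) (h t y) + 4*K*C) := by ring
    · -- upper bound
      calc dist (h t x) (h t y) ≤ K * dist (f x + t) (f y + t) + 3*K*C := hfbd _ _
        _ = K * dist (f x) (f y) + 3*K*C := by rw [dist_add_right]
        _ ≤ K * (K * dist x y + C) + 3*K*C := by nlinarith [hup x y]
        _ ≤ K^2 * dist x y + 4*K*C := by nlinarith
    · -- coarse surjectivity
      intro y
      refine ⟨fb (f y - t), ?_⟩
      have c1 : dist (f (fb (f y - t))) (f y - t) ≤ C := hfb _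
      have c2 : dist (f (fb (f y - t)) + t) (f y) ≤ C := by
        have : dist (f (fb (f y - t)) + t) (f y) = dist (f (fb (f y - t))) (f y - t) := by
          rw [dist_eq_norm, dist_eq_norm]; congr 1; abel
        rw [this]; exact c1
      have c3 : dist (f (h t (fb (f y - t)))) (f (fb (f y - t)) + t) ≤ C := hfb _
      have c4 : dist (f (h t (fb (f y - t)))) (f y) ≤ 2*C := by
        have := dist_triangle (f (h t (fb (f y - t)))) (f (fb (f y - t)) + t) (f y)
        linarith
      calc dist (h t (fb (f y - t))) y ≤ K * dist (f (h t (fb (f y - t)))) (f y) + K*C :=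
            hlo _ _
        _ ≤ K * (2*C) + K*C := by nlinarith
        _ ≤ 4*K*C := by nlinarith
  -- each h t coarsely respects the pattern of F
  set R₁ : ℝ := K*(2*C₀ + 2*C + 2) with hR₁def
  have hR₁0 : 0 ≤ R₁ := by
    have : (0:ℝ) ≤ 2*C₀ + 2*C + 2 := by linarith
    exact mul_nonneg hKpos.le this
  have hresp : ∀ t, RespectsParallelPatterns R₁ (h t) F := by
    intro t V hV v
    obtain ⟨B, hB, hfS⟩ := hsend.1 (affTranslate v V) ⟨v, V, hV, rfl⟩
    obtain ⟨b0, W, hW, rfl⟩ := hB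
    obtain ⟨A, hA, hfA⟩ := hsend.2 (affTranslate (b0 + t) W) ⟨b0 + t, W, hW, rfl⟩
    obtain ⟨a0, V₂, hV₂, rfl⟩ := hA
    have hmain : EMetric.hausdorffEdist ((h t) '' affTranslate v V) (affTranslate a0 V₂)
        ≤ ENNReal.ofReal R₁ := by
      apply hausdorffEdist_le_ofReal
      · rintro p ⟨x, hx, rfl⟩
        obtain ⟨y, hy, hdy⟩ :=
          exists_dist_le_of_hausdorffEdist_le hC₀ hfS (Set.mem_image_of_mem f hx)
        have hyt : y + t ∈ affTranslate (b0 + t) W := by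
          obtain ⟨z, hz, rfl⟩ := mem_affTranslate.mp hy
          exact mem_affTranslate.mpr ⟨z, hz, by abel⟩
        obtain ⟨q, hq, hdq⟩ := exists_dist_le_of_hausdorffEdist_le hC₀
          (Metric.hausdorffEDist_comm.trans_le hfA) hyt
        obtain ⟨a', ha', rfl⟩ := hq
        refine ⟨a', ha', ?_⟩
        have d1 : dist (f (h t x)) (f x + t) ≤ C := hfb _
        have d2 : dist (f x + t) (y + t) = dist (f x) y := dist_add_right _ _ _
        have d3 : dist (f (h t x)) (f a') ≤ C + (2*C₀ + 2) := by
          have := dist_triangle4 (f (h t x)) (f x + t) (y + t) (f a')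
          rw [d2] at this
          linarith
        calc dist (h t x) a' ≤ K * dist (f (h t x)) (f a') + K*C := hlo _ _
          _ ≤ K * (C + (2*C₀+2)) + K*C := by nlinarith
          _ = R₁ := by rw [hR₁def]; ring
      · intro q hq
        obtain ⟨y', hy', hdy'⟩ := exists_dist_le_of_hausdorffEdist_le hC₀ hfA
          (Set.mem_image_of_mem f hq)
        obtain ⟨z, hz, rfl⟩ := mem_affTranslate.mp hy'
        have hyB : b0 + z ∈ affTranslate b0 W := mem_affTranslate.mpr ⟨z, hz, rfl⟩
        obtain ⟨p, hp, hdp⟩ := exists_dist_le_of_hausdorffEdist_le hC₀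
          (Metric.hausdorffEDist_comm.trans_le hfS) hyB
        obtain ⟨x, hx, rfl⟩ := hp
        refine ⟨h t x, Set.mem_image_of_mem _ hx, ?_⟩
        have d1 : dist (f (h t x)) (f x + t) ≤ C := hfb _
        have d2 : dist (f x + t) (b0 + z + t) = dist (f x) (b0 + z) := dist_add_right _ _ _
        have d2' : dist (f x) (b0 + z) ≤ C₀ + 1 := by rw [dist_comm]; exact hdp
        have d3 : dist (b0 + z + t) (f q) ≤ C₀ + 1 := by
          have : b0 + z + t = b0 + t + z := by abel
          rw [this, dist_comm]; exact hdy'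
        have d4 : dist (f (h t x)) (f q) ≤ C + (2*C₀ + 2) := by
          have := dist_triangle4 (f (h t x)) (f x + t) (b0 + z + t) (f q)
          rw [d2] at this
          linarith
        calc dist (h t x) q ≤ K * dist (f (h t x)) (f q) + K*C := hlo _ _
          _ ≤ K * (C + (2*C₀+2)) + K*C := by nlinarith
          _ = R₁ := by rw [hR₁def]; ring
    have hlz : EMetric.hausdorffEdist ((h t) '' affTranslate v V) (affTranslate v V)
        ≤ ENNReal.ofReal (K*(2*C + ‖t‖)) := by
      apply hausdorffEdist_le_ofReal
      · rintro p ⟨x, hx, rfl⟩; exact ⟨x, hx, hlazy t x⟩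
      · intro x hx; exact ⟨h t x, Set.mem_image_of_mem _ hx, hlazy t x⟩
    have hlznn : 0 ≤ K*(2*C + ‖t‖) := by positivity
    have htri : EMetric.hausdorffEdist (affTranslate a0 V₂) (affTranslate v V)
        ≤ ENNReal.ofReal (R₁ + K*(2*C + ‖t‖)) := by
      rw [ENNReal.ofReal_add hR₁0 hlznn]
      calc EMetric.hausdorffEdist (affTranslate a0 V₂) (affTranslate v V)
          ≤ EMetric.hausdorffEdist (affTranslate a0 V₂) ((h t) '' affTranslate v V)
            + EMetric.hausdorffEdist ((h t) '' affTranslate v V) (affTranslate v V) :=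
            EMetric.hausdorffEdist_triangle
        _ ≤ ENNReal.ofReal R₁ + ENNReal.ofReal (K*(2*C + ‖t‖)) := by
            apply add_le_add _ hlz
            exact Metric.hausdorffEDist_comm.trans_le hmain
    have hVeq : V₂ = V := direction_eq_of_hausdorffEdist_le htri
    rw [hVeq] at hmain
    exact ⟨a0, hmain⟩
  -- rigidity
  obtain ⟨R', hR'0, hspec⟩ := hrigid (K^2) (4*K*C) R₁ (by nlinarith) (by positivity) hR₁0
  -- the scaling factor is 1
  have hbeta : ∀ t, ∃ bb : E, ∀ x, dist (h t x) (x + bb) ≤ R' := by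
    intro t
    obtain ⟨lam, bb, hlam, hb⟩ := hspec (h t) (hhqi t) (hresp t)
    have hcomb : ∀ x : E, ‖lam • x + bb - x‖ ≤ R' + K*(2*C + ‖t‖) := by
      intro x
      have t1 := dist_triangle (lam • x + bb) (h t x) x
      have t2 : dist (lam • x + bb) (h t x) = dist (h t x) (lam • x + bb) := dist_comm _ _
      rw [← dist_eq_norm]
      linarith [hb x, hlazy t x]
    have hlam1 : lam = 1 := by
      have key : ∀ N : ℕ, ((N:ℝ)+1) * |lam - 1| ≤ R' + K*(2*C + ‖t‖) + ‖bb‖ := by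
        intro N
        set c : ℝ := ((N:ℝ)+1) with hc
        have hcpos : (0:ℝ) < c := by positivity
        have h5 := hcomb (c • e)
        have heq : lam • (c • e) + bb - c • e = (c * (lam - 1)) • e + bb := by
          module
        rw [heq] at h5
        have h4 : ‖(c*(lam-1)) • e‖ - ‖bb‖ ≤ ‖(c*(lam-1)) • e + bb‖ := by
          have h6 := norm_add_le ((c*(lam-1)) • e + bb) (-bb)
          simp only [add_neg_cancel_right, norm_neg] at h6
          linarith
        rw [norm_smul, Real.norm_eq_abs, he, mul_one, abs_mul, abs_of_pos hcpos] at h4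
        linarith
      have h7 := arch_zero (abs_nonneg _) key
      have := abs_eq_zero.mp h7
      linarith
    exact ⟨bb, fun x => by have := hb x; rwa [hlam1, one_smul] at this⟩
  choose β hβ using hbeta
  set E₀ : ℝ := K*R' + 2*C with hE₀def
  have hE₀0 : 0 ≤ E₀ := by nlinarith
  -- upstairs bound
  have hupst : ∀ t x, dist (f (x + β t)) (f x + t) ≤ E₀ := by
    intro t x
    have d1 : dist (x + β t) (h t x) ≤ R' := by rw [dist_comm]; exact hβ t x
    have d2 : dist (f (x + β t)) (f (h t x)) ≤ K*R' + C := by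
      have := hup (x + β t) (h t x)
      nlinarith
    have d3 : dist (f (h t x)) (f x + t) ≤ C := hfb _
    have := dist_triangle (f (x + β t)) (f (h t x)) (f x + t)
    rw [hE₀def]; linarith
  set D : ℝ := 3*K*E₀ + K*C with hDdef
  have hD0 : 0 ≤ D := by nlinarith
  -- quasimorphism property
  have hquasi : ∀ t s : E, ‖β t + β s - β (t + s)‖ ≤ D := by
    intro t s
    have A1 : dist (f (β t)) (f 0 + t) ≤ E₀ := by simpa using hupst t 0
    have A2 : dist (f (β t + β s)) (f (β t) + s) ≤ E₀ := by
      have := hupst s (β t); exact this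
    have A3 : dist (f (β (t + s))) (f 0 + (t + s)) ≤ E₀ := by simpa using hupst (t + s) 0
    have A4 : dist (f (β t) + s) (f 0 + (t + s)) = dist (f (β t)) (f 0 + t) := by
      rw [dist_eq_norm, dist_eq_norm]; congr 1; abel
    have A5 : dist (f (β t + β s)) (f (β (t + s))) ≤ 3*E₀ := by
      have t1 := dist_triangle (f (β t + β s)) (f (β t) + s) (f 0 + (t + s))
      have t2 := dist_triangle (f (β t + β s)) (f 0 + (t + s)) (f (β (t + s)))
      rw [A4] at t1
      have t3 : dist (f 0 + (t+s)) (f (β (t+s))) = dist (f (β (t+s))) (f 0 + (t+s)) :=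
        dist_comm _ _
      rw [t3] at t2
      linarith
    have A6 : dist (β t + β s) (β (t + s)) ≤ K*(3*E₀) + K*C := by
      have := hlo (β t + β s) (β (t + s))
      nlinarith
    rw [← dist_eq_norm]
    rw [hDdef]; linarith
  -- growth bounds
  have hgrow : ∀ t, ‖β t‖ ≤ K*‖t‖ + (K*E₀ + K*C) := by
    intro t
    have A1 : dist (f (β t)) (f 0 + t) ≤ E₀ := by simpa using hupst t 0
    have A2 : dist (f 0 + t) (f 0) = ‖t‖ := by rw [dist_eq_norm, add_sub_cancel_left]
    have A3 : dist (f (β t)) (f 0) ≤ E₀ + ‖t‖ := by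
      have := dist_triangle (f (β t)) (f 0 + t) (f 0)
      rw [A2] at this; linarith
    have A4 := hlo (β t) 0
    rw [dist_zero_right] at A4
    nlinarith
  have hlow2 : ∀ t, ‖t‖ ≤ K*‖β t‖ + (E₀ + C) := by
    intro t
    have A1 : dist (f 0 + t) (f (β t)) ≤ E₀ := by
      rw [dist_comm]; simpa using hupst t 0
    have A2 : dist (f (β t)) (f 0) ≤ K*‖β t‖ + C := by
      have := hup (β t) 0
      rw [dist_zero_right] at this; linarith
    have A3 : dist (f 0 + t) (f 0) = ‖t‖ := by rw [dist_eq_norm, add_sub_cancel_left]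
    have := dist_triangle (f 0 + t) (f (β t)) (f 0)
    rw [A3] at this; linarith
    -- the rescaled sequence
  set u : E → ℕ → E := fun t k => ((2:ℝ)^k)⁻¹ • β ((2:ℝ)^k • t) with hu
  have h2k : ∀ k : ℕ, ((1:ℝ)/2)^k = ((2:ℝ)^k)⁻¹ := by
    intro k; rw [div_pow, one_pow, one_div]
  have hstep : ∀ t (k : ℕ), dist (u t k) (u t (k+1)) ≤ (D/2) * (1/2)^k := by
    intro t k
    have h2pos : (0:ℝ) < (2:ℝ)^k := by positivity
    set s : E := (2:ℝ)^k • t with hs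
    have hss : ((2:ℝ)^(k+1)) • t = s + s := by
      rw [pow_succ', mul_smul, two_smul]
    have hfrac : ((2:ℝ)^k)⁻¹ = ((2:ℝ)^(k+1))⁻¹ * 2 := by
      rw [pow_succ]
      field_simp
    have hdiff : u t k - u t (k+1) = ((2:ℝ)^(k+1))⁻¹ • (β s + β s - β (s + s)) := by
      rw [hu]
      simp only []
      rw [← hs, hss, hfrac]
      module
    rw [dist_eq_norm, hdiff, norm_smul, Real.norm_eq_abs,
      abs_of_pos (by positivity : (0:ℝ) < ((2:ℝ)^(k+1))⁻¹)]
    have hb := hquasi s s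
    have h2le : ((2:ℝ)^(k+1))⁻¹ * ‖β s + β s - β (s + s)‖ ≤ ((2:ℝ)^(k+1))⁻¹ * D :=
      mul_le_mul_of_nonneg_left hb (by positivity)
    refine le_trans h2le (le_of_eq ?_)
    rw [h2k, pow_succ, mul_inv]
    ring
  have hcau : ∀ t, CauchySeq (u t) :=
    fun t => cauchySeq_of_le_geometric (1/2) (D/2) (by norm_num) (hstep t)
  have hlim : ∀ t, ∃ L, Filter.Tendsto (u t) Filter.atTop (nhds L) :=
    fun t => cauchySeq_tendsto_of_complete (hcau t)
  choose βh hβh using hlim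
  have hu0 : ∀ t, u t 0 = β t := by
    intro t
    rw [hu]
    simp
  -- distance from β to βh
  have hclose : ∀ t, dist (β t) (βh t) ≤ D := by
    intro t
    have hind : ∀ k : ℕ, dist (u t 0) (u t k) ≤ D - D*(1/2)^k := by
      intro k
      induction k with
      | zero => simp
      | succ k ih =>
        have := dist_triangle (u t 0) (u t k) (u t (k+1))
        have h2 := hstep t k
        have h3 : D - D*(1/2)^k + (D/2)*(1/2)^k = D - D*(1/2)^(k+1) := by
          rw [pow_succ]; ring
        linarith
    have htend : Filter.Tendsto (fun k => dist (u t 0) (u t k)) Filter.atTop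
        (nhds (dist (u t 0) (βh t))) := Filter.Tendsto.dist tendsto_const_nhds (hβh t)
    have hle : dist (u t 0) (βh t) ≤ D := by
      apply le_of_tendsto htend
      filter_upwards with k
      have h4 : (0:ℝ) ≤ D*(1/2)^k := by positivity
      linarith [hind k]
    rwa [hu0] at hle
  -- additivity
  have hadd : ∀ t s : E, βh (t + s) = βh t + βh s := by
    intro t s
    have hw : Filter.Tendsto (fun k => u t k + u s k - u (t+s) k) Filter.atTop
        (nhds (βh t + βh s - βh (t+s))) := ((hβh t).add (hβh s)).sub (hβh (t+s))
    have hbound : ∀ k : ℕ, ‖u t k + u s k - u (t+s) k‖ ≤ D * (1/2)^k := by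
      intro k
      have hcomb : u t k + u s k - u (t+s) k
          = ((2:ℝ)^k)⁻¹ • (β ((2:ℝ)^k • t) + β ((2:ℝ)^k • s)
            - β ((2:ℝ)^k • t + (2:ℝ)^k • s)) := by
        rw [hu]
        simp only []
        rw [smul_add, smul_sub, smul_add]
      rw [hcomb, norm_smul, Real.norm_eq_abs,
        abs_of_pos (by positivity : (0:ℝ) < ((2:ℝ)^k)⁻¹)]
      have := hquasi ((2:ℝ)^k • t) ((2:ℝ)^k • s)
      have h5 : ((2:ℝ)^k)⁻¹ * ‖β ((2:ℝ)^k • t) + β ((2:ℝ)^k • s)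
          - β ((2:ℝ)^k • t + (2:ℝ)^k • s)‖ ≤ ((2:ℝ)^k)⁻¹ * D :=
        mul_le_mul_of_nonneg_left this (by positivity)
      refine le_trans h5 (le_of_eq ?_)
      rw [h2k]
      ring
    have hzero : Filter.Tendsto (fun k => u t k + u s k - u (t+s) k) Filter.atTop
        (nhds 0) := by
      apply squeeze_zero_norm hbound
      have := (tendsto_pow_atTop_nhds_zero_of_lt_one
        (by norm_num : (0:ℝ) ≤ 1/2) (by norm_num : (1:ℝ)/2 < 1)).const_mul D
      simpa using this
    have h6 := tendsto_nhds_unique hw hzero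
    exact (sub_eq_zero.mp h6).symm
  set βhom : E →+ E := AddMonoidHom.mk' βh (fun a b => hadd a b) with hβhom
  have hβhomcoe : ∀ x, βhom x = βh x := fun x => rfl
  -- natural scalar compatibility
  have hsmulnat : ∀ (N : ℕ) (t : E), βh (((N:ℝ)+1) • t) = ((N:ℝ)+1) • βh t := by
    intro N t
    have h1 : (((N:ℝ)+1)) • t = ((N+1 : ℕ) : ℝ) • t := by push_cast; ring_nf
    have h2 : ((N+1:ℕ) : ℝ) • t = (N+1 : ℕ) • t := Nat.cast_smul_eq_nsmul ℝ _ _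
    have h3 : βhom ((N+1:ℕ) • t) = (N+1:ℕ) • βhom t := map_nsmul βhom (N+1) t
    rw [hβhomcoe, hβhomcoe] at h3
    rw [h1, h2, h3, ← Nat.cast_smul_eq_nsmul ℝ (N+1) (βh t)]
    push_cast
    ring_nf
  -- crude growth bound
  have hcrude : ∀ t, ‖βh t‖ ≤ K*‖t‖ + (K*E₀ + K*C + D) := by
    intro t
    have h1 : ‖βh t‖ ≤ ‖β t‖ + D := by
      have h2 : ‖βh t‖ ≤ ‖β t‖ + ‖βh t - β t‖ := by
        have := norm_add_le (β t) (βh t - β t)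
        simpa using this
      have h3 : ‖βh t - β t‖ = dist (β t) (βh t) := by
        rw [dist_eq_norm, norm_sub_rev]
      rw [h3] at h2
      linarith [hclose t]
    linarith [hgrow t]
  -- exact Lipschitz bound
  have hlip : ∀ t, ‖βh t‖ ≤ K*‖t‖ := by
    intro t
    by_contra hcon
    push_neg at hcon
    set a : ℝ := ‖βh t‖ - K*‖t‖ with ha
    have hapos : 0 < a := by rw [ha]; linarith
    have key : ∀ N : ℕ, ((N:ℝ)+1) * a ≤ K*E₀ + K*C + D := by
      intro N
      have hcpos : (0:ℝ) < (N:ℝ)+1 := by positivity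
      have h1 := hcrude (((N:ℝ)+1) • t)
      rw [hsmulnat N t, norm_smul, norm_smul, Real.norm_eq_abs, abs_of_pos hcpos] at h1
      rw [ha]
      nlinarith
    have := arch_zero hapos.le key
    linarith
  -- βh is linear
  have hcont : Continuous βh := by
    have hlipw : LipschitzWith (Real.toNNReal K) βh := by
      apply LipschitzWith.of_dist_le_mul
      intro x y
      rw [dist_eq_norm, dist_eq_norm]
      have h1 : βh x - βh y = βh (x - y) := (map_sub βhom x y).symm
      rw [h1]
      calc ‖βh (x - y)‖ ≤ K * ‖x - y‖ := hlip _
        _ = (Real.toNNReal K) * ‖x - y‖ := by rw [Real.coe_toNNReal K hKpos.le]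
    exact hlipw.continuous
  set βL : E →L[ℝ] E := AddMonoidHom.toRealLinearMap βhom hcont with hβL
  have hβLcoe : ∀ x, βL x = βh x := fun x => rfl
  set βlin : E →ₗ[ℝ] E := (βL : E →L[ℝ] E).toLinearMap with hβlin
  have hβlincoe : ∀ x, βlin x = βh x := fun x => rfl
  -- injectivity
  have hzero : ∀ t, βh t = 0 → t = 0 := by
    intro t ht
    have key : ∀ N : ℕ, ((N:ℝ)+1) * ‖t‖ ≤ K*D + (E₀ + C) := by
      intro N
      have hcpos : (0:ℝ) < (N:ℝ)+1 := by positivity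
      set s : E := ((N:ℝ)+1) • t with hs
      have h1 : βh s = 0 := by rw [hs, hsmulnat, ht, smul_zero]
      have h2 : ‖β s‖ ≤ D := by
        have h5 : ‖β s‖ = dist (β s) (βh s) := by rw [h1, dist_zero_right]
        rw [h5]
        exact hclose s
      have h6 := hlow2 s
      have h7 : ‖s‖ = ((N:ℝ)+1) * ‖t‖ := by
        rw [hs, norm_smul, Real.norm_eq_abs, abs_of_pos hcpos]
      rw [h7] at h6
      nlinarith
    have h8 := arch_zero (norm_nonneg t) key
    exact norm_eq_zero.mp h8
  have hinj : Function.Injective βlin := by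
    intro a b hab
    have h1 : βh (a - b) = 0 := by
      rw [← hβhomcoe, map_sub βhom]
      rw [hβhomcoe, hβhomcoe, ← hβlincoe, ← hβlincoe, hab, sub_self]
    have := hzero _ h1
    exact sub_eq_zero.mp this
  have hbij : Function.Bijective βlin := ⟨hinj, LinearMap.injective_iff_surjective.mp hinj⟩
  set Beq : E ≃ₗ[ℝ] E := LinearEquiv.ofBijective βlin hbij with hBeq
  refine ⟨(Beq.symm : E ≃ₗ[ℝ] E).toLinearMap, f 0, K*D + C + E₀, ?_, ?_, ?_⟩
  · exact Beq.symm.bijective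
  · nlinarith
  · intro x
    set t : E := Beq.symm x with ht
    have hx : βh t = x := by
      have h1 : βlin t = Beq t := rfl
      have h2 : Beq t = x := by rw [ht]; exact Beq.apply_symm_apply x
      rw [← hβlincoe, h1, h2]
    have d1 : dist (f (βh t)) (f (β t)) ≤ K*D + C := by
      have h3 := hup (βh t) (β t)
      have h4 : dist (βh t) (β t) ≤ D := by rw [dist_comm]; exact hclose t
      nlinarith
    have d2 : dist (f (β t)) (f 0 + t) ≤ E₀ := by simpa using hupst t 0
    have d3 : dist (f (βh t)) (f 0 + t) ≤ K*D + C + E₀ := by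
      have := dist_triangle (f (βh t)) (f (β t)) (f 0 + t)
      linarith
    have h5 : (Beq.symm : E ≃ₗ[ℝ] E).toLinearMap x + f 0 = f 0 + t := by
      rw [ht]; exact add_comm _ _
    rw [h5, ← hx]
    exact d3

/-- Let `F`, `F'` be finite collections of linear subspaces of `ℝⁿ` with `F` rigid, and let
`f` be a quasi-isometry of `ℝⁿ` sending the affine pattern `P_F` to `P_{F'}`.  Then `f` is at
bounded distance from an invertible affine map, and, up to homothety, only finitely many
affine maps arise in this way over all quasi-isometries sending `P_F` to `P_{F'}`. -/
theorem quasiIsometry_sending_rigid_pattern_is_affine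
    {n : ℕ} (F F' : Set (Submodule ℝ (EuclideanSpace ℝ (Fin n))))
    (hFfin : F.Finite) (hF'fin : F'.Finite) (hrigid : RigidCollection F)
    (f : EuclideanSpace ℝ (Fin n) → EuclideanSpace ℝ (Fin n))
    (K C : ℝ) (hK : 1 ≤ K) (hC : 0 ≤ C) (hf : IsQI K C f)
    (C₀ : ℝ) (hC₀ : 0 ≤ C₀) (hsend : SendsPattern f F F' C₀) :
    (∃ (M : EuclideanSpace ℝ (Fin n) →ₗ[ℝ] EuclideanSpace ℝ (Fin n))
        (b : EuclideanSpace ℝ (Fin n)) (C₁ : ℝ),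
        Function.Bijective M ∧ 0 ≤ C₁ ∧ ∀ x, dist (f x) (M x + b) ≤ C₁) ∧
    ∃ s : Finset (EuclideanSpace ℝ (Fin n) →ₗ[ℝ] EuclideanSpace ℝ (Fin n)),
      ∀ g : EuclideanSpace ℝ (Fin n) → EuclideanSpace ℝ (Fin n),
        (∃ K' C' : ℝ, 1 ≤ K' ∧ 0 ≤ C' ∧ IsQI K' C' g) →
        (∃ C₀' : ℝ, 0 ≤ C₀' ∧ SendsPattern g F F' C₀') →
        ∀ (M : EuclideanSpace ℝ (Fin n) →ₗ[ℝ] EuclideanSpace ℝ (Fin n))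
          (b : EuclideanSpace ℝ (Fin n)) (C₁ : ℝ),
          Function.Bijective M → (∀ x, dist (g x) (M x + b) ≤ C₁) →
          ∃ M₀ ∈ s, ∃ lam : ℝ, lam ≠ 0 ∧ M = lam • M₀ := by
  classical
  constructor
  · exact exists_affine_approx hrigid f K C hK hC hf C₀ hC₀ hsend
  · haveI : Finite ↥F := hFfin.to_subtype
    set 𝓜 : Set (EuclideanSpace ℝ (Fin n) →ₗ[ℝ] EuclideanSpace ℝ (Fin n)) :=
      {M | Function.Bijective ⇑M ∧ ∀ V ∈ F, Submodule.map M V ∈ F'} with h𝓜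
    set Φ : (EuclideanSpace ℝ (Fin n) →ₗ[ℝ] EuclideanSpace ℝ (Fin n)) → (↥F → Submodule ℝ (EuclideanSpace ℝ (Fin n))) :=
      fun M V => Submodule.map M (V : Submodule ℝ (EuclideanSpace ℝ (Fin n))) with hΦ
    have hQfin : (Φ '' 𝓜).Finite := by
      apply Set.Finite.subset (Set.Finite.pi (fun _ : ↥F => hF'fin))
      rintro q ⟨M, hM, rfl⟩
      rw [Set.mem_pi]
      intro V _
      exact hM.2 V V.2
    set r : (↥F → Submodule ℝ (EuclideanSpace ℝ (Fin n))) → (EuclideanSpace ℝ (Fin n) →ₗ[ℝ] EuclideanSpace ℝ (Fin n)) :=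
      fun q => if h : ∃ M ∈ 𝓜, Φ M = q then h.choose else 0 with hr
    refine ⟨hQfin.toFinset.image r, ?_⟩
    intro g hgqi hgsend M b C₁ hMbij hMdist
    obtain ⟨C₀', hC₀', hgs⟩ := hgsend
    have hMmem : M ∈ 𝓜 := ⟨hMbij, map_mem_of_approx hC₀' hgs M b C₁ hMdist⟩
    have hq : Φ M ∈ Φ '' 𝓜 := Set.mem_image_of_mem Φ hMmem
    have hexq : ∃ M' ∈ 𝓜, Φ M' = Φ M := ⟨M, hMmem, rfl⟩
    set M₀ : EuclideanSpace ℝ (Fin n) →ₗ[ℝ] EuclideanSpace ℝ (Fin n) := hexq.choose with hM₀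
    obtain ⟨hM₀mem, hM₀eq⟩ := hexq.choose_spec
    have hrq : r (Φ M) = M₀ := by
      rw [hr]
      simp only []
      rw [dif_pos hexq]
    have hM₀in : M₀ ∈ hQfin.toFinset.image r :=
      Finset.mem_image.mpr ⟨Φ M, hQfin.mem_toFinset.mpr hq, hrq⟩
    have hsame : ∀ V ∈ F, Submodule.map M V = Submodule.map M₀ V := by
      intro V hV
      have := congrFun hM₀eq ⟨V, hV⟩
      exact this.symm
    obtain ⟨lam, hlam, heq⟩ := scalar_of_same_action hrigid M M₀ hMbij hM₀mem.1 hsame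
    exact ⟨M₀, hM₀in, lam, hlam, heq⟩
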